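/- Let e_1,…,e_d be an orthonormal basis of ℝ^d, let H = span(e_1,…,e_{d-1}), and let W = {ξ ∈ S^{d-1} : |⟨ξ, e_d⟩| ≥ 1/√d}. For ξ ∈ W define the projection along ξ onto H by P_ξ(x) = x − (⟨x, e_d⟩/⟨ξ, e_d⟩)ξ. Suppose L = span(ξ, M) with M a (k−1)-dimensional subspace of H, and let L_δ(a) be the δ-neighborhood of (L + a) ∩ B(a, 1/2). Then P_ξ(L_δ(a)) is contained in the cδ-neighborhood of P_ξ(a) + (M ∩ B(0,c)) within H, where c depends only on d. -/

import Mathlib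

open MeasureTheory Set Metric ENNReal

noncomputable section

abbrev Ed (d : ℕ) := EuclideanSpace ℝ (Fin d)

instance (d : ℕ) : MeasurableSpace (Submodule ℝ (Ed d)) := ⊤

/-- `γ` is the invariant probability measure on the Grassmannian `G(d,k)`. -/
def IsGrassmannianMeasure (d k : ℕ) (γ : Measure (Submodule ℝ (Ed d))) : Prop :=
  IsProbabilityMeasure γ ∧
    (∀ θ : Ed d ≃ₗᵢ[ℝ] Ed d,
      Measure.map (fun L => Submodule.map (θ.toLinearEquiv : Ed d →ₗ[ℝ] Ed d) L) γ = γ) ∧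
    γ {L | Module.finrank ℝ L = k}ᶜ = 0

/-- The `δ`-plate `L_δ(a)`: the `δ`-neighborhood of `(L + a) ∩ B(a, 1/2)`. -/
def plate (d : ℕ) (L : Submodule ℝ (Ed d)) (δ : ℝ) (a : Ed d) : Set (Ed d) :=
  Metric.thickening δ ({x | x - a ∈ L} ∩ Metric.closedBall a (1 / 2))

/-- The plate-average maximal operator `M^k_δ`. -/
def maxOp (d : ℕ) (δ : ℝ) (f : Ed d → ℝ≥0∞) (L : Submodule ℝ (Ed d)) : ℝ≥0∞ :=
  ⨆ a : Ed d, (volume (plate d L δ a))⁻¹ * ∫⁻ x in plate d L δ a, f x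

open RealInnerProductSpace in
/-- the projection along `ξ` of a `δ`-plate of `L = span(ξ, M)` is contained in a
`cδ`-neighborhood of a unit-scale `(k-1)`-disc of `M` inside the hyperplane `H = u^⊥`. -/
theorem stmt_8 (d k : ℕ) (hd : 1 ≤ d) (hk : 1 ≤ k) (hkd : k < d) :
    ∃ c > (0:ℝ), ∀ (u ξ : Ed d), ‖u‖ = 1 → ‖ξ‖ = 1 →
      (1 : ℝ) / Real.sqrt d ≤ |⟪ξ, u⟫| →
      ∀ M : Submodule ℝ (Ed d), M ≤ (ℝ ∙ u)ᗮ → Module.finrank ℝ M = k - 1 →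
      ∀ (δ : ℝ), 0 < δ → ∀ a : Ed d,
      (fun x => x - (⟪x, u⟫ / ⟪ξ, u⟫) • ξ) '' plate d ((ℝ ∙ ξ) ⊔ M) δ a ⊆
        Metric.thickening (c * δ)
          ((fun m => (a - (⟪a, u⟫ / ⟪ξ, u⟫) • ξ) + m) ''
            ((M : Set (Ed d)) ∩ Metric.closedBall 0 c)) := by
  refine ⟨1 + Real.sqrt d, by positivity, ?_⟩
  intro u ξ hu hξ hinner M hMu hMrk δ hδ a
  set s := ⟪ξ, u⟫ with hs
  have hd0 : (0:ℝ) < Real.sqrt d := by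
    have : (1:ℝ) ≤ (d:ℝ) := by exact_mod_cast hd
    positivity
  have hs0 : (0:ℝ) < |s| := lt_of_lt_of_le (by positivity) hinner
  have hsne : s ≠ 0 := fun h => by simp [h] at hs0
  set P : Ed d → Ed d := fun x => x - (⟪x, u⟫ / s) • ξ with hP
  -- key norm bound
  have hPb : ∀ z : Ed d, ‖P z‖ ≤ (1 + Real.sqrt d) * ‖z‖ := by
    intro z
    have h1 : |⟪z, u⟫| ≤ ‖z‖ := by
      have := abs_real_inner_le_norm z u
      simpa [hu] using this
    have h2 : ‖P z‖ ≤ ‖z‖ + |⟪z, u⟫| / |s| := by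
      calc ‖P z‖ ≤ ‖z‖ + ‖(⟪z, u⟫ / s) • ξ‖ := norm_sub_le _ _
        _ = ‖z‖ + |⟪z, u⟫| / |s| := by
            rw [norm_smul, hξ, Real.norm_eq_abs, abs_div, mul_one]
    have h3 : |⟪z, u⟫| / |s| ≤ Real.sqrt d * ‖z‖ := by
      rw [div_le_iff₀ hs0]
      have h4 : ‖z‖ = Real.sqrt d * ‖z‖ * (1 / Real.sqrt d) := by
        field_simp
      have h5 : Real.sqrt d * ‖z‖ * (1 / Real.sqrt d) ≤ Real.sqrt d * ‖z‖ * |s| :=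
        mul_le_mul_of_nonneg_left hinner (by positivity)
      linarith
    linarith
  have hPsub : ∀ z w : Ed d, P z - P w = P (z - w) := by
    intro z w
    simp only [hP, inner_sub_left, sub_div, sub_smul]
    abel
  rintro _ ⟨x, hx, rfl⟩
  rw [plate, mem_thickening_iff] at hx
  obtain ⟨y, ⟨hyL, hyB⟩, hdist⟩ := hx
  obtain ⟨p, hp, q, hq, hpq⟩ := Submodule.mem_sup.mp hyL
  obtain ⟨b, rfl⟩ := Submodule.mem_span_singleton.mp hp
  have hqu : ⟪q, u⟫ = 0 := by
    have := (Submodule.mem_orthogonal' _ _).mp (hMu hq) u (Submodule.mem_span_singleton_self u)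
    simpa [real_inner_comm] using this
  have hPya : P y - P a = q := by
    rw [hPsub, ← hpq]
    simp only [hP, inner_add_left, inner_smul_left, hqu, real_inner_comm ξ u, ← hs, conj_trivial]
    rw [show (b * s + 0) / s = b by field_simp; ring]
    abel
  have hqnorm : ‖q‖ ≤ 1 + Real.sqrt d := by
    have hya : ‖y - a‖ ≤ 1 / 2 := by
      have := mem_closedBall.mp hyB
      rwa [dist_eq_norm] at this
    have hq2 : ‖q‖ ≤ (1 + Real.sqrt d) * (1/2) := by
      calc ‖q‖ = ‖P (y - a)‖ := by rw [← hPya, hPsub]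
        _ ≤ (1 + Real.sqrt d) * ‖y - a‖ := hPb _
        _ ≤ (1 + Real.sqrt d) * (1/2) := by nlinarith
    nlinarith
  rw [mem_thickening_iff]
  refine ⟨P a + q, ⟨q, ⟨hq, by simpa using hqnorm⟩, rfl⟩, ?_⟩
  have : P a + q = P y := by rw [← hPya]; abel
  rw [this, dist_eq_norm, hPsub]
  calc ‖P (x - y)‖ ≤ (1 + Real.sqrt d) * ‖x - y‖ := hPb _
    _ < (1 + Real.sqrt d) * δ := by
        have : ‖x - y‖ < δ := by rwa [dist_eq_norm] at hdist
        nlinarith
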